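/- Let n ≥ 1 and let R = (R_1, …, R_{n−1}) be a flat family of subsets of {1, …, n+1}. Let S be an R-admissible sequence. Then Sing(S) = ∅ if and only if the oriented mutation graph of S is a transitive tournament on n+1 vertices; that is, if and only if there exists a strict total order ≺ on {1, …, n+1} such that for all i ≠ j, |Mut_S(i,j)| = 1 when i ≺ j and Mut_S(i,j) = ∅ when j ≺ i. -/

import Mathlib

/-- `R` is a flat family. -/
def FlatFamily (n : ℕ) (R : ℕ → Finset ℕ) : Prop :=
  (∀ h, 1 ≤ h → h ≤ n - 1 → (R h).card ≤ 2) ∧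
  (∀ h, 1 ≤ h → h ≤ n - 2 → (R h ∪ R (h + 1)).card ≤ 3)

/-- `S` is an `R`-admissible sequence. -/
def RAdmissible (n : ℕ) (R S : ℕ → Finset ℕ) : Prop :=
  (∀ t, 1 ≤ t → t ≤ n - 1 → R t ⊆ Finset.Icc 1 (n + 1)) ∧
  (∀ i, 1 ≤ i → i ≤ n → S i ⊆ Finset.Icc 1 (n + 1) ∧ (S i).card = i) ∧
  (∀ i, 1 ≤ i → i ≤ n - 1 → S i ⊆ S (i + 1) ∪ R i)

/-- `(j, h+1) ∈ Sing_i(S)`. -/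
def SingCond (n : ℕ) (R S : ℕ → Finset ℕ) (i j h : ℕ) : Prop :=
  h ∈ Finset.Icc 1 (n - 1) ∧ i ∈ R h ∧ j ∉ S (h + 1) ∧
  ∃ k, k ≤ h ∧ k ∈ Finset.Icc 1 (n - 1) ∧ j ∈ R k ∧
    (∀ t, k ≤ t → t ≤ h → i ∈ S t) ∧ (∀ t, k ≤ t → t ≤ h - 1 → i ∉ R t)

/-- `Sing(S)`: the disjoint union of the `Sing_i(S)`, as triples `(i, j, h+1)`. -/
def Sing (n : ℕ) (R S : ℕ → Finset ℕ) : Set (ℕ × ℕ × ℕ) :=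
  {p | p.1 ∈ Finset.Icc 1 (n + 1) ∧ ∃ h, p.2.2 = h + 1 ∧ SingCond n R S p.1 p.2.1 h}

/-- A mutation of `S` from row `i` to row `j`, given by columns `a ≤ b`. -/
def IsMut (n : ℕ) (R S : ℕ → Finset ℕ) (i j a b : ℕ) : Prop :=
  1 ≤ a ∧ a ≤ b ∧ b ≤ n ∧
  (∀ t, a ≤ t → t ≤ b → i ∈ S t) ∧ (∀ t, a ≤ t → t ≤ b - 1 → i ∉ R t) ∧
  (a = 1 ∨ i ∉ S (a - 1) ∨ i ∈ R (a - 1)) ∧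
  (∀ t, a ≤ t → t ≤ b → j ∉ S t) ∧ (∀ t, a ≤ t → t ≤ b - 1 → j ∉ R t) ∧
  (b = n ∨ j ∈ S (b + 1) ∨ j ∈ R b)

/-- `Mut_S(i,j)`: the set of mutations of `S` from row `i` to row `j`. -/
def MutSet (n : ℕ) (R S : ℕ → Finset ℕ) (i j : ℕ) : Set (ℕ × ℕ) :=
  {p | IsMut n R S i j p.1 p.2}

namespace SingAux

open Finset
open scoped Classical

noncomputable section

variable (n : ℕ) (R S : ℕ → Finset ℕ) (j : ℕ)

/-- trigger condition for target `j` at column `u`. -/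
def trig (u : ℕ) : Prop := u = n ∨ j ∈ S (u + 1) ∨ j ∈ R u

lemma trig_n : trig n R S j n := Or.inl rfl

/-- least trigger column `≥ a`. -/
def beta (a : ℕ) : ℕ := sInf {u | a ≤ u ∧ trig n R S j u}

variable {n R S j}

lemma bset_ne {a : ℕ} (ha : a ≤ n) : {u | a ≤ u ∧ trig n R S j u}.Nonempty :=
  ⟨n, ha, trig_n n R S j⟩

lemma le_beta {a : ℕ} (ha : a ≤ n) : a ≤ beta n R S j a :=
  (Nat.sInf_mem (bset_ne ha)).1

lemma beta_trig {a : ℕ} (ha : a ≤ n) : trig n R S j (beta n R S j a) :=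
  (Nat.sInf_mem (bset_ne ha)).2

lemma beta_le {a : ℕ} (ha : a ≤ n) : beta n R S j a ≤ n :=
  Nat.sInf_le ⟨ha, trig_n n R S j⟩

lemma beta_le_of_trig {a u : ℕ} (hau : a ≤ u) (ht : trig n R S j u) :
    beta n R S j a ≤ u := Nat.sInf_le ⟨hau, ht⟩

lemma beta_min {a u : ℕ} (hu : a ≤ u) (h : u < beta n R S j a) : ¬ trig n R S j u :=
  fun ht => Nat.notMem_of_lt_sInf h ⟨hu, ht⟩

lemma beta_min' {a u : ℕ} (hau : a ≤ u) (h : u < beta n R S j a) :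
    u ≠ n ∧ j ∉ S (u + 1) ∧ j ∉ R u := by
  have := beta_min hau h
  unfold trig at this
  push_neg at this
  exact this

variable (n R S j)

/-- rows alive at column `t` and not in `R t`. -/
def aliveF (t : ℕ) : Finset ℕ := if t = 0 then ∅ else S t \ R t

/-- rows alive throughout the block of `a` (from `a` to its trigger). -/
def TT (a : ℕ) : Finset ℕ :=
  (Finset.Icc 1 (n + 1)).filter (fun i =>
    (∀ u, a ≤ u → u ≤ beta n R S j a → i ∈ S u) ∧
    (∀ u, a ≤ u → u + 1 ≤ beta n R S j a → i ∉ R u))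

/-- mutations into `j` starting after column `t`. -/
def MF (t : ℕ) : Finset (ℕ × ℕ × ℕ) :=
  ((Finset.Icc 1 (n + 1)) ×ˢ (Finset.Icc (t + 1) n) ×ˢ (Finset.Icc 1 n)).filter
    (fun q => IsMut n R S q.1 j q.2.1 q.2.2)

/-- number of columns `> t` where `j` is absent. -/
def AF (t : ℕ) : ℕ := ((Finset.Icc (t + 1) n).filter (fun u => j ∉ S u)).card

def DD (t : ℕ) : ℕ := (TT n R S j (t + 1) ∩ aliveF R S t).card

def INV (c t : ℕ) : Prop :=
  (t + 1 ≤ n ∧ j ∉ S (t + 1) →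
    (MF n R S j t).card + DD n R S j t ≥ AF n S j t + t + c) ∧
  (¬ (t + 1 ≤ n ∧ j ∉ S (t + 1)) → (MF n R S j t).card ≥ AF n S j t + c)

variable {n R S j}

lemma AF_succ {t : ℕ} (h1 : 1 ≤ t) (h2 : t ≤ n) :
    AF n S j (t - 1) = if j ∈ S t then AF n S j t else AF n S j t + 1 := by
  have hIcc : Finset.Icc (t - 1 + 1) n = insert t (Finset.Icc (t + 1) n) := by
    ext x; simp [Finset.mem_Icc, Finset.mem_insert]; omega
  have hnot : t ∉ Finset.Icc (t + 1) n := by simp only [Finset.mem_Icc]; omega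
  unfold AF
  rw [hIcc, Finset.filter_insert]
  by_cases hj : j ∈ S t
  · simp [hj]
  · simp only [hj, if_neg, if_pos, not_false_iff]
    rw [Finset.card_insert_of_notMem (fun hx => hnot (Finset.mem_filter.mp hx).1)]

lemma DD_le (hadm : RAdmissible n R S) {t : ℕ} (h2 : t ≤ n) : DD n R S j t ≤ t := by
  unfold DD
  rcases Nat.eq_zero_or_pos t with rfl | hpos
  · simp [aliveF]
  · have h1 : aliveF R S t = S t \ R t := by simp [aliveF, Nat.pos_iff_ne_zero.mp hpos]
    calc (TT n R S j (t + 1) ∩ aliveF R S t).card ≤ (aliveF R S t).card :=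
          Finset.card_le_card (Finset.inter_subset_right)
      _ ≤ (S t).card := by rw [h1]; exact Finset.card_le_card (Finset.sdiff_subset)
      _ = t := (hadm.2.1 t hpos h2).2


lemma beta_eq_self {t : ℕ} (h2 : t ≤ n) (ht : trig n R S j t) : beta n R S j t = t :=
  le_antisymm (Nat.sInf_le ⟨le_rfl, ht⟩) (le_beta h2)

lemma TT_card_of_trig (hadm : RAdmissible n R S) {t : ℕ} (h1 : 1 ≤ t) (h2 : t ≤ n)
    (ht : trig n R S j t) : (TT n R S j t).card = t := by
  have hb := beta_eq_self h2 ht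
  have hTT : TT n R S j t = S t := by
    ext i
    simp only [TT, Finset.mem_filter, hb]
    constructor
    · rintro ⟨_, hS, _⟩; exact hS t le_rfl le_rfl
    · intro hi
      refine ⟨(hadm.2.1 t h1 h2).1 hi, ?_, ?_⟩
      · intro u hu hu'; have huu : u = t := le_antisymm hu' hu; rw [huu]; exact hi
      · intro u hu hu'; exact absurd hu' (by omega)
  rw [hTT]; exact (hadm.2.1 t h1 h2).2

lemma not_trig_facts {t : ℕ} (hnt : ¬ trig n R S j t) :
    t ≠ n ∧ j ∉ S (t + 1) ∧ j ∉ R t := by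
  unfold trig at hnt; push_neg at hnt; exact hnt

lemma beta_cont {t : ℕ} (hnt : ¬ trig n R S j t) :
    beta n R S j t = beta n R S j (t + 1) := by
  unfold beta
  congr 1
  ext u
  simp only [Set.mem_setOf_eq]
  constructor
  · rintro ⟨hu, htr⟩
    refine ⟨?_, htr⟩
    rcases Nat.eq_or_lt_of_le hu with rfl | h
    · exact absurd htr hnt
    · omega
  · rintro ⟨hu, htr⟩; exact ⟨by omega, htr⟩

lemma TT_cont {t : ℕ} (h1 : 1 ≤ t) (h2 : t ≤ n) (hnt : ¬ trig n R S j t) :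
    TT n R S j t = TT n R S j (t + 1) ∩ aliveF R S t := by
  have hne := (not_trig_facts hnt).1
  have h2' : t + 1 ≤ n := by omega
  have hb := beta_cont (j := j) hnt
  have htb : t + 1 ≤ beta n R S j (t + 1) := le_beta h2'
  have hal : aliveF R S t = S t \ R t := by simp [aliveF]; omega
  ext i
  simp only [TT, Finset.mem_inter, Finset.mem_filter, hb, hal, Finset.mem_sdiff]
  constructor
  · rintro ⟨hi, hS, hR⟩
    exact ⟨⟨hi, fun u hu hu' => hS u (by omega) hu', fun u hu hu' => hR u (by omega) hu'⟩,
      hS t le_rfl (by omega), hR t le_rfl (by omega)⟩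
  · rintro ⟨⟨hi, hS, hR⟩, hSt, hRt⟩
    refine ⟨hi, ?_, ?_⟩
    · intro u hu hu'
      rcases Nat.eq_or_lt_of_le hu with rfl | h
      · exact hSt
      · exact hS u (by omega) hu'
    · intro u hu hu'
      rcases Nat.eq_or_lt_of_le hu with rfl | h
      · exact hRt
      · exact hR u (by omega) hu'

lemma MF_present {t : ℕ} (h1 : 1 ≤ t) (hj : j ∈ S t) :
    MF n R S j (t - 1) = MF n R S j t := by
  ext q
  obtain ⟨i, a, b⟩ := q
  simp only [MF, Finset.mem_filter, Finset.mem_product, Finset.mem_Icc]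
  constructor
  · rintro ⟨⟨hi, ⟨ha1, ha2⟩, hb⟩, hm⟩
    refine ⟨⟨hi, ⟨?_, ha2⟩, hb⟩, hm⟩
    rcases Nat.lt_or_ge a (t + 1) with h | h
    · have hat : a = t := by omega
      exact absurd (hat ▸ hj) (hm.2.2.2.2.2.2.1 a le_rfl hm.2.1)
    · exact h
  · rintro ⟨⟨hi, ⟨ha1, ha2⟩, hb⟩, hm⟩
    exact ⟨⟨hi, ⟨by omega, ha2⟩, hb⟩, hm⟩

lemma MF_absent {t : ℕ} (h1 : 1 ≤ t) (h2 : t ≤ n) (hj : j ∉ S t) :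
    (MF n R S j (t - 1)).card
      = (MF n R S j t).card + (TT n R S j t \ aliveF R S (t - 1)).card := by
  set B := beta n R S j t with hB
  have hbn : B ≤ n := beta_le h2
  have htb : t ≤ B := le_beta h2
  set N : Finset (ℕ × ℕ × ℕ) := (TT n R S j t \ aliveF R S (t - 1)).image
    (fun i => (i, t, B)) with hN
  have hMF : MF n R S j (t - 1) = MF n R S j t ∪ N := by
    ext q
    obtain ⟨i, a, b⟩ := q
    simp only [MF, hN, Finset.mem_union, Finset.mem_filter, Finset.mem_product,
      Finset.mem_Icc, Finset.mem_image, Finset.mem_sdiff]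
    constructor
    · rintro ⟨⟨hi, ⟨ha1, ha2⟩, hb1, hb2⟩, hm⟩
      rcases Nat.lt_or_ge t a with h | h
      · exact Or.inl ⟨⟨hi, ⟨h, ha2⟩, hb1, hb2⟩, hm⟩
      · have hat : a = t := by omega
        obtain ⟨m1, m2, m3, m4, m5, m6, m7, m8, m9⟩ := hm
        have htrb : trig n R S j b := m9
        have hbB : b = B := by
          have hBle : B ≤ b := Nat.sInf_le ⟨hat ▸ m2, htrb⟩
          rcases Nat.eq_or_lt_of_le hBle with h' | h'
          · exact h'.symm
          · exfalso
            have htB : trig n R S j B := beta_trig h2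
            rcases htB with h'' | h'' | h''
            · omega
            · exact m7 (B + 1) (by omega) (by omega) h''
            · exact m8 B (by omega) (by omega) h''
        refine Or.inr ⟨i, ⟨?_, ?_⟩, by rw [hat, hbB]⟩
        · simp only [TT, Finset.mem_filter, ← hB, Finset.mem_Icc]
          exact ⟨hi, fun u hu hu' => m4 u (by omega) (by omega),
            fun u hu hu' => m5 u (by omega) (by omega)⟩
        · rcases Nat.eq_or_lt_of_le h1 with h1' | h1'
          · simp [aliveF, ← h1']
          · have : aliveF R S (t - 1) = S (t - 1) \ R (t - 1) := by
              simp [aliveF]; omega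
            rw [this, Finset.mem_sdiff]
            rcases m6 with h6 | h6 | h6
            · omega
            · rw [hat] at h6; intro hc; exact h6 hc.1
            · rw [hat] at h6; intro hc; exact hc.2 h6
    · rintro (⟨⟨hi, ⟨ha1, ha2⟩, hb1, hb2⟩, hm⟩ | ⟨x, ⟨hxT, hxA⟩, heq⟩)
      · exact ⟨⟨hi, ⟨by omega, ha2⟩, hb1, hb2⟩, hm⟩
      · injection heq with he1 he2
        injection he2 with he2 he3
        subst he1; subst he2; subst he3
        simp only [TT, Finset.mem_filter, Finset.mem_Icc, ← hB] at hxT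
        obtain ⟨hx1, hxS, hxR⟩ := hxT
        have htrB : trig n R S j B := beta_trig h2
        refine ⟨⟨hx1, ⟨by omega, by omega⟩, by omega, hbn⟩, ?_⟩
        refine ⟨h1, htb, hbn, hxS, fun u hu hu' => hxR u hu (by omega), ?_, ?_, ?_, htrB⟩
        · rcases Nat.eq_or_lt_of_le h1 with h1' | h1'
          · exact Or.inl h1'.symm
          · have hal : aliveF R S (t - 1) = S (t - 1) \ R (t - 1) := by simp [aliveF]; omega
            rw [hal, Finset.mem_sdiff] at hxA
            rcases not_and_or.mp hxA with h' | h'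
            · exact Or.inr (Or.inl h')
            · exact Or.inr (Or.inr (not_not.mp h'))
        · intro u hu hu'
          rcases Nat.eq_or_lt_of_le hu with rfl | h'
          · exact hj
          · intro hc
            have htr : trig n R S j (u - 1) :=
              Or.inr (Or.inl (by rwa [show u - 1 + 1 = u by omega]))
            exact beta_min (n := n) (R := R) (S := S) (j := j) (a := t) (u := u - 1) (by omega) (by omega) htr
        · intro u hu hu' hc
          exact beta_min (n := n) (R := R) (S := S) (j := j) (a := t) (u := u) hu (by omega) (Or.inr (Or.inr hc))
  have hdisj : Disjoint (MF n R S j t) N := by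
    rw [Finset.disjoint_left]
    rintro ⟨i, a, b⟩ hq hq'
    simp only [MF, Finset.mem_filter, Finset.mem_product, Finset.mem_Icc] at hq
    simp only [hN, Finset.mem_image] at hq'
    obtain ⟨x, _, heq⟩ := hq'
    injection heq with he1 he2
    injection he2 with he2 he3
    omega
  rw [hMF, Finset.card_union_of_disjoint hdisj, hN,
    Finset.card_image_of_injective _ (fun x y hxy => congrArg Prod.fst hxy)]
lemma step' (hadm : RAdmissible n R S) (c t : ℕ) (h1 : 1 ≤ t) (h2 : t ≤ n)
    (hplain : (MF n R S j t).card ≥ AF n S j t + c)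
    (hbr : ¬ trig n R S j t → j ∉ S t →
      (MF n R S j t).card + DD n R S j t ≥ AF n S j t + t + c) :
    INV n R S j c (t - 1) := by
  have ht1 : t - 1 + 1 = t := by omega
  by_cases hj : j ∈ S t
  · have hA : AF n S j (t - 1) = AF n S j t := by rw [AF_succ h1 h2]; simp [hj]
    have hM := MF_present (n := n) (R := R) (j := j) h1 hj
    constructor
    · intro hbranch; rw [ht1] at hbranch; exact absurd hj hbranch.2
    · intro _; rw [hM, hA]; exact hplain
  · have hA : AF n S j (t - 1) = AF n S j t + 1 := by rw [AF_succ h1 h2]; simp [hj]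
    have hM := MF_absent (n := n) (R := R) (j := j) h1 h2 hj
    have hcard : (TT n R S j t \ aliveF R S (t - 1)).card + DD n R S j (t - 1)
        = (TT n R S j t).card := by
      unfold DD; rw [ht1, add_comm]; exact Finset.card_inter_add_card_sdiff _ _
    constructor
    · intro _
      by_cases htr : trig n R S j t
      · have hTc : (TT n R S j t).card = t := TT_card_of_trig hadm h1 h2 htr
        omega
      · have hTc : (TT n R S j t).card = DD n R S j t := by
          unfold DD; rw [TT_cont h1 h2 htr]
        have := hbr htr hj
        omega
    · intro hbranch
      rw [ht1] at hbranch
      exact absurd ⟨h2, hj⟩ hbranch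

lemma step (hadm : RAdmissible n R S) (c t : ℕ) (h1 : 1 ≤ t) (h2 : t ≤ n)
    (h : INV n R S j c t) : INV n R S j c (t - 1) := by
  apply step' hadm c t h1 h2
  · by_cases hbranch : t + 1 ≤ n ∧ j ∉ S (t + 1)
    · have h' := h.1 hbranch
      have hD : DD n R S j t ≤ t := DD_le hadm h2
      omega
    · exact h.2 hbranch
  · intro hnt hjt
    obtain ⟨hne, hS1, hR1⟩ := not_trig_facts hnt
    have := h.1 ⟨by omega, hS1⟩
    omega

lemma down (hadm : RAdmissible n R S) (c t₀ : ℕ) (h₀ : t₀ ≤ n)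
    (base : INV n R S j c t₀) : ∀ t, t ≤ t₀ → INV n R S j c t := by
  have key : ∀ d, INV n R S j c (t₀ - d) := by
    intro d
    induction d with
    | zero => simpa using base
    | succ d ih =>
      rcases Nat.eq_zero_or_pos (t₀ - d) with h | h
      · rw [show t₀ - (d + 1) = t₀ - d by omega]; exact ih
      · rw [show t₀ - (d + 1) = (t₀ - d) - 1 by omega]
        exact step hadm c (t₀ - d) h (by omega) ih
  intro t ht
  rw [show t = t₀ - (t₀ - t) by omega]
  exact key _

lemma base0 : INV n R S j 0 n := by
  constructor
  · intro hbranch; exact absurd hbranch.1 (by omega)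
  · intro _
    have hA : AF n S j n = 0 := by
      unfold AF
      rw [Finset.Icc_eq_empty (by omega)]
      simp
    omega

lemma inv_zero_extract {c : ℕ} (h : INV n R S j c 0) :
    (MF n R S j 0).card ≥ AF n S j 0 + c := by
  by_cases hbranch : 0 + 1 ≤ n ∧ j ∉ S (0 + 1)
  · have h' := h.1 hbranch
    have hD : DD n R S j 0 = 0 := by simp [DD, aliveF]
    omega
  · exact h.2 hbranch

lemma target_ineq (hadm : RAdmissible n R S) : (MF n R S j 0).card ≥ AF n S j 0 := by
  have := inv_zero_extract (j := j) (down hadm 0 n le_rfl base0 0 (by omega))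
  omega

lemma target_strict (hadm : RAdmissible n R S) {i₀ h : ℕ} (hsc : SingCond n R S i₀ j h) :
    (MF n R S j 0).card ≥ AF n S j 0 + 1 := by
  obtain ⟨hhI, hiR, hjS, k, hkh, hkI, hjR, hiS, hiRno⟩ := hsc
  rw [Finset.mem_Icc] at hhI hkI
  have hn2 : 2 ≤ n := by omega
  set P : Set ℕ := {u | 1 ≤ u ∧ (∀ v, u ≤ v → v ≤ h + 1 → j ∉ S v) ∧
    (∀ v, u ≤ v → v ≤ h → j ∉ R v)} with hP
  have hw : h + 1 ∈ P :=
    ⟨by omega, fun v hv hv' => by rw [show v = h + 1 by omega]; exact hjS,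
      fun v hv hv' => absurd hv' (by omega)⟩
  have hPne : P.Nonempty := ⟨h + 1, hw⟩
  set p := sInf P with hp
  obtain ⟨hp1, habsS, habsR⟩ := Nat.sInf_mem hPne
  have hpk : k + 1 ≤ p := by
    by_contra hc
    exact habsR k (by omega) hkh hjR
  have hph : p ≤ h + 1 := Nat.sInf_le hw
  have hcut : j ∈ S (p - 1) ∨ j ∈ R (p - 1) := by
    by_contra hcc
    push_neg at hcc
    have hmem : p - 1 ∈ P := by
      refine ⟨by omega, ?_, ?_⟩
      · intro v hv hv'
        rcases Nat.eq_or_lt_of_le hv with h' | h'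
        · rw [← h']; exact hcc.1
        · exact habsS v (by omega) hv'
      · intro v hv hv'
        rcases Nat.eq_or_lt_of_le hv with h' | h'
        · rw [← h']; exact hcc.2
        · exact habsR v (by omega) hv'
    exact absurd (Nat.sInf_le hmem) (by omega)
  have hpn : p ≤ n := by omega
  have hbp : h + 1 ≤ beta n R S j p := by
    by_contra hc
    push_neg at hc
    have htr := beta_trig (n := n) (R := R) (S := S) (j := j) hpn
    have hge := le_beta (n := n) (R := R) (S := S) (j := j) hpn
    rcases htr with h' | h' | h'
    · omega
    · exact habsS _ (by omega) (by omega) h'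
    · exact habsR _ (by omega) (by omega) h'
  have hi0S : i₀ ∈ S (p - 1) := hiS (p - 1) (by omega) (by omega)
  have hsub : TT n R S j p ∩ aliveF R S (p - 1) ⊆ (S (p - 1)).erase i₀ := by
    intro x hx
    rw [Finset.mem_inter] at hx
    have hal : aliveF R S (p - 1) = S (p - 1) \ R (p - 1) := by
      simp only [aliveF, if_neg (show p - 1 ≠ 0 by omega)]
    rw [hal, Finset.mem_sdiff] at hx
    rw [Finset.mem_erase]
    refine ⟨?_, hx.2.1⟩
    rintro rfl
    rcases Nat.eq_or_lt_of_le (show p - 1 ≤ h by omega) with h' | h'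
    · exact hx.2.2 (h' ▸ hiR)
    · have hxT := hx.1
      simp only [TT, Finset.mem_filter] at hxT
      exact hxT.2.2 h (by omega) (by omega) hiR
  have hDb : DD n R S j (p - 1) + 2 ≤ p := by
    have hc1 : DD n R S j (p - 1) ≤ ((S (p - 1)).erase i₀).card := by
      unfold DD; rw [show p - 1 + 1 = p by omega]; exact Finset.card_le_card hsub
    have hc2 : ((S (p - 1)).erase i₀).card = (S (p - 1)).card - 1 :=
      Finset.card_erase_of_mem hi0S
    have hc3 : (S (p - 1)).card = p - 1 := (hadm.2.1 (p - 1) (by omega) (by omega)).2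
    omega
  have hinv0 := down (j := j) hadm 0 n le_rfl base0 (p - 1) (by omega)
  have hbranch : (p - 1) + 1 ≤ n ∧ j ∉ S ((p - 1) + 1) := by
    rw [show p - 1 + 1 = p by omega]
    exact ⟨hpn, habsS p le_rfl (by omega)⟩
  have hplain1 : (MF n R S j (p - 1)).card ≥ AF n S j (p - 1) + 1 := by
    have h' := hinv0.1 hbranch
    omega
  have hinv1 : INV n R S j 1 (p - 1 - 1) := by
    apply step' hadm 1 (p - 1) (by omega) (by omega) hplain1
    intro hnt hjp
    exfalso
    rcases hcut with h' | h'
    · exact hjp h'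
    · exact hnt (Or.inr (Or.inr h'))
  have hfin := down hadm 1 (p - 1 - 1) (by omega) hinv1 0 (by omega)
  exact inv_zero_extract hfin

/-! ### Forward direction: chain structure and entry order -/

lemma chain_of_sing_empty (hadm : RAdmissible n R S) (hSing : Sing n R S = ∅) :
    ∀ t, 1 ≤ t → t ≤ n - 1 → S t ⊆ S (t + 1) := by
  intro t h1 h2 x hx
  by_contra hx'
  have hxR : x ∈ R t := by
    rcases Finset.mem_union.mp (hadm.2.2 t h1 h2 hx) with h | h
    · exact absurd h hx'
    · exact h
  have hsc : SingCond n R S x x t :=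
    ⟨Finset.mem_Icc.mpr ⟨h1, h2⟩, hxR, hx', t, le_rfl, Finset.mem_Icc.mpr ⟨h1, h2⟩, hxR,
      fun u hu hu' => by rw [show u = t by omega]; exact hx,
      fun u hu hu' => absurd hu' (by omega)⟩
  have hmem : ((x, x, t + 1) : ℕ × ℕ × ℕ) ∈ Sing n R S :=
    ⟨(hadm.2.1 t h1 (by omega)).1 hx, t, rfl, hsc⟩
  rw [hSing] at hmem
  exact hmem

lemma chain_mono (hchain : ∀ t, 1 ≤ t → t ≤ n - 1 → S t ⊆ S (t + 1))
    {t u : ℕ} (h1 : 1 ≤ t) (htu : t ≤ u) (hun : u ≤ n) {x : ℕ} (hx : x ∈ S t) :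
    x ∈ S u := by
  have key : ∀ d, t + d ≤ n → x ∈ S (t + d) := by
    intro d
    induction d with
    | zero => intro _; simpa using hx
    | succ v ih =>
      intro hdn
      have h' : x ∈ S (t + v) := ih (by omega)
      have h'' := hchain (t + v) (by omega) (by omega) h'
      rwa [show t + v + 1 = t + (v + 1) by omega] at h''
  have := key (u - t) (by omega)
  rwa [show t + (u - t) = u by omega] at this

variable (n S) in
def ent (i : ℕ) : ℕ := sInf {t | (1 ≤ t ∧ t ≤ n ∧ i ∈ S t) ∨ t = n + 1}

lemma ent_mem (i : ℕ) :
    (1 ≤ ent n S i ∧ ent n S i ≤ n ∧ i ∈ S (ent n S i)) ∨ ent n S i = n + 1 :=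
  Nat.sInf_mem (⟨n + 1, Or.inr rfl⟩ :
    {t | (1 ≤ t ∧ t ≤ n ∧ i ∈ S t) ∨ t = n + 1}.Nonempty)

lemma ent_pos (i : ℕ) : 1 ≤ ent n S i := by
  rcases ent_mem (n := n) (S := S) i with ⟨h, _, _⟩ | h
  · exact h
  · omega

lemma ent_le (i : ℕ) : ent n S i ≤ n + 1 := Nat.sInf_le (Or.inr rfl)

lemma ent_spec (hchain : ∀ t, 1 ≤ t → t ≤ n - 1 → S t ⊆ S (t + 1))
    (i : ℕ) {t : ℕ} (h1 : 1 ≤ t) (h2 : t ≤ n) : i ∈ S t ↔ ent n S i ≤ t := by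
  constructor
  · intro hi
    exact Nat.sInf_le (Or.inl ⟨h1, h2, hi⟩)
  · intro hle
    rcases ent_mem (n := n) (S := S) i with ⟨he1, he2, he3⟩ | he
    · exact chain_mono hchain he1 hle h2 he3
    · omega

lemma ent_inj (hadm : RAdmissible n R S)
    (hchain : ∀ t, 1 ≤ t → t ≤ n - 1 → S t ⊆ S (t + 1))
    {i1 i2 : ℕ} (hi1 : i1 ∈ Finset.Icc 1 (n + 1)) (hi2 : i2 ∈ Finset.Icc 1 (n + 1))
    (hn : 1 ≤ n) (he : ent n S i1 = ent n S i2) : i1 = i2 := by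
  set m := ent n S i1 with hm
  have hm1 : 1 ≤ m := ent_pos i1
  have hmn : m ≤ n + 1 := ent_le i1
  rcases Nat.lt_or_ge m (n + 1) with hlt | hge
  · -- m ≤ n : both in S m
    have hin1 : i1 ∈ S m := (ent_spec hchain i1 hm1 (by omega)).mpr le_rfl
    have hin2 : i2 ∈ S m := (ent_spec hchain i2 hm1 (by omega)).mpr (by omega)
    rcases Nat.eq_or_lt_of_le hm1 with h1' | h1'
    · -- m = 1
      obtain ⟨x, hx⟩ := Finset.card_eq_one.mp
        (by rw [(hadm.2.1 1 le_rfl hn).2] : (S 1).card = 1)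
      rw [← h1'] at hin1 hin2
      rw [hx, Finset.mem_singleton] at hin1 hin2
      rw [hin1, hin2]
    · -- m ≥ 2
      have hnm1 : i1 ∉ S (m - 1) := by
        rw [ent_spec hchain i1 (by omega) (by omega)]
        omega
      have hnm2 : i2 ∉ S (m - 1) := by
        rw [ent_spec hchain i2 (by omega) (by omega)]
        omega
      have hsub : S (m - 1) ⊆ S m := by
        intro x hx
        exact chain_mono hchain (by omega) (by omega) (by omega) hx
      have hcard : (S m \ S (m - 1)).card = 1 := by
        rw [Finset.card_sdiff_of_subset hsub, (hadm.2.1 m (by omega) (by omega)).2,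
          (hadm.2.1 (m - 1) (by omega) (by omega)).2]
        omega
      obtain ⟨x, hx⟩ := Finset.card_eq_one.mp hcard
      have e1 : i1 ∈ S m \ S (m - 1) := Finset.mem_sdiff.mpr ⟨hin1, hnm1⟩
      have e2 : i2 ∈ S m \ S (m - 1) := Finset.mem_sdiff.mpr ⟨hin2, hnm2⟩
      rw [hx, Finset.mem_singleton] at e1 e2
      rw [e1, e2]
  · -- m = n + 1 : both outside S n
    have hmeq : m = n + 1 := by omega
    have hn1 : i1 ∉ S n := by
      rw [ent_spec hchain i1 hn le_rfl]; omega
    have hn2 : i2 ∉ S n := by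
      rw [ent_spec hchain i2 hn le_rfl]; omega
    have hsub : S n ⊆ Finset.Icc 1 (n + 1) := (hadm.2.1 n hn le_rfl).1
    have hcard : ((Finset.Icc 1 (n + 1)) \ S n).card = 1 := by
      rw [Finset.card_sdiff_of_subset hsub, (hadm.2.1 n hn le_rfl).2, Nat.card_Icc]
      omega
    obtain ⟨x, hx⟩ := Finset.card_eq_one.mp hcard
    have e1 : i1 ∈ Finset.Icc 1 (n + 1) \ S n := Finset.mem_sdiff.mpr ⟨hi1, hn1⟩
    have e2 : i2 ∈ Finset.Icc 1 (n + 1) \ S n := Finset.mem_sdiff.mpr ⟨hi2, hn2⟩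
    rw [hx, Finset.mem_singleton] at e1 e2
    rw [e1, e2]

lemma mut_empty (hchain : ∀ t, 1 ≤ t → t ≤ n - 1 → S t ⊆ S (t + 1))
    {i1 i2 : ℕ} (hlt : ent n S i2 < ent n S i1) : MutSet n R S i1 i2 = ∅ := by
  ext q
  obtain ⟨a, b⟩ := q
  simp only [MutSet, Set.mem_setOf_eq, Set.mem_empty_iff_false, iff_false]
  intro hm
  obtain ⟨m1, m2, m3, m4, m5, m6, m7, m8, m9⟩ := hm
  have hi1a : i1 ∈ S a := m4 a le_rfl m2
  have he1 : ent n S i1 ≤ a := (ent_spec hchain i1 m1 (by omega)).mp hi1a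
  have hi2a : i2 ∈ S a := (ent_spec hchain i2 m1 (by omega)).mpr (by omega)
  exact m7 a le_rfl m2 hi2a

lemma mut_singleton (hadm : RAdmissible n R S) (hSing : Sing n R S = ∅)
    (hchain : ∀ t, 1 ≤ t → t ≤ n - 1 → S t ⊆ S (t + 1))
    {i1 i2 : ℕ} (hi1 : i1 ∈ Finset.Icc 1 (n + 1))
    (hlt : ent n S i1 < ent n S i2) :
    ∃ q : ℕ × ℕ, MutSet n R S i1 i2 = {q} := by
  set e1 := ent n S i1 with he1
  set e2 := ent n S i2 with he2
  have he2n : e2 ≤ n + 1 := ent_le i2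
  have he1n : e1 ≤ n := by omega
  have he1p : 1 ≤ e1 := ent_pos i1
  have he2p : 1 ≤ e2 := ent_pos i2
  set b₀ := beta n R S i2 e1 with hb₀
  have hb1 : e1 ≤ b₀ := le_beta he1n
  have hb2 : b₀ ≤ n := beta_le he1n
  have htrb : trig n R S i2 b₀ := beta_trig he1n
  have hbe2 : b₀ < e2 := by
    rcases Nat.lt_or_ge n e2 with h' | h'
    · omega
    · have htr : trig n R S i2 (e2 - 1) := Or.inr (Or.inl (by
        rw [show e2 - 1 + 1 = e2 by omega]
        exact (ent_spec hchain i2 he2p h').mpr le_rfl))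
      have hle : b₀ ≤ e2 - 1 := beta_le_of_trig (by omega) htr
      omega
  have habs2 : ∀ u, 1 ≤ u → u ≤ b₀ → i2 ∉ S u := by
    intro u hu1 hu2 hc
    have := (ent_spec hchain i2 hu1 (by omega)).mp hc
    omega
  have hnoR2 : ∀ u, e1 ≤ u → u < b₀ → i2 ∉ R u := by
    intro u hu1 hu2 hc
    exact beta_min (n := n) (R := R) (S := S) (j := i2) (a := e1) hu1 hu2
      (Or.inr (Or.inr hc))
  set Q : Set ℕ := {a | e1 ≤ a ∧ ∀ u, a ≤ u → u + 1 ≤ b₀ → i1 ∉ R u} with hQ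
  have hQw : b₀ ∈ Q := ⟨hb1, fun u hu hu' => absurd hu' (by omega)⟩
  set a₀ := sInf Q with ha₀
  obtain ⟨ha1, hnoR1⟩ := Nat.sInf_mem (⟨b₀, hQw⟩ : Q.Nonempty)
  have ha2 : a₀ ≤ b₀ := Nat.sInf_le hQw
  have hi1S : ∀ u, e1 ≤ u → u ≤ n → i1 ∈ S u := by
    intro u hu1 hu2
    exact (ent_spec hchain i1 (by omega) hu2).mpr hu1
  have hleft : a₀ = e1 ∨ i1 ∈ R (a₀ - 1) := by
    rcases Nat.eq_or_lt_of_le ha1 with h' | h'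
    · exact Or.inl h'.symm
    · right
      have hnm : a₀ - 1 ∉ Q := Nat.notMem_of_lt_sInf (by omega)
      rw [hQ, Set.mem_setOf_eq] at hnm
      push_neg at hnm
      obtain ⟨u, hu, hu', hc⟩ := hnm (by omega)
      have huu : u = a₀ - 1 := by
        by_contra hne
        exact hnoR1 u (by omega) hu' hc
      rw [← huu]; exact hc
  have hexist : IsMut n R S i1 i2 a₀ b₀ := by
    refine ⟨by omega, ha2, hb2, ?_, ?_, ?_, ?_, ?_, htrb⟩
    · intro u hu hu'; exact hi1S u (by omega) (by omega)
    · intro u hu hu'; exact hnoR1 u hu (by omega)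
    · rcases hleft with h' | h'
      · rcases Nat.eq_or_lt_of_le he1p with h'' | h''
        · left; omega
        · right; left
          rw [ent_spec hchain i1 (by omega) (by omega)]
          omega
      · exact Or.inr (Or.inr h')
    · intro u hu hu'; exact habs2 u (by omega) hu'
    · intro u hu hu'; exact hnoR2 u (by omega) (by omega)
  refine ⟨(a₀, b₀), ?_⟩
  ext q
  obtain ⟨a, b⟩ := q
  simp only [MutSet, Set.mem_setOf_eq, Set.mem_singleton_iff, Prod.mk.injEq]
  constructor
  · intro hm
    obtain ⟨m1, m2, m3, m4, m5, m6, m7, m8, m9⟩ := hm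
    have hea : e1 ≤ a := (ent_spec hchain i1 m1 (by omega)).mp (m4 a le_rfl m2)
    have htrb' : trig n R S i2 b := m9
    rcases le_or_gt a b₀ with hab | hab
    · have hbb : b = b₀ := by
        have h1' : b₀ ≤ b := beta_le_of_trig (by omega) htrb'
        rcases Nat.eq_or_lt_of_le h1' with h'' | h''
        · exact h''.symm
        · exfalso
          rcases htrb with ht | ht | ht
          · omega
          · exact m7 (b₀ + 1) (by omega) (by omega) ht
          · exact m8 b₀ (by omega) (by omega) ht
      have haa : a = a₀ := by
        have hle1 : a₀ ≤ a := Nat.sInf_le ⟨hea, fun u hu hu' => m5 u hu (by omega)⟩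
        rcases Nat.eq_or_lt_of_le hle1 with h'' | h''
        · exact h''.symm
        · exfalso
          rcases m6 with h6 | h6 | h6
          · omega
          · exact h6 (hi1S (a - 1) (by omega) (by omega))
          · exact hnoR1 (a - 1) (by omega) (by omega) h6
      exact ⟨haa, hbb⟩
    · exfalso
      have hi1Ra : i1 ∈ R (a - 1) := by
        rcases m6 with h6 | h6 | h6
        · omega
        · exact absurd (hi1S (a - 1) (by omega) (by omega)) h6
        · exact h6
      set W : Set ℕ := {u | b₀ ≤ u ∧ i1 ∈ R u} with hW
      have hWw : (a - 1) ∈ W := ⟨by omega, hi1Ra⟩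
      set hh := sInf W with hhh
      obtain ⟨hw1, hw2⟩ := Nat.sInf_mem (⟨a - 1, hWw⟩ : W.Nonempty)
      have hwle : hh ≤ a - 1 := Nat.sInf_le hWw
      have hwmin : ∀ u, b₀ ≤ u → u < hh → i1 ∉ R u := fun u hu hu' hc =>
        Nat.notMem_of_lt_sInf hu' ⟨hu, hc⟩
      have hi2a : i2 ∉ S a := m7 a le_rfl m2
      have habs2' : ∀ u, 1 ≤ u → u ≤ a → i2 ∉ S u := by
        intro u hu1 hu2 hc
        exact hi2a (chain_mono hchain hu1 hu2 (by omega) hc)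
      have hi2Rb : i2 ∈ R b₀ := by
        rcases htrb with ht | ht | ht
        · omega
        · exact absurd ht (habs2' (b₀ + 1) (by omega) (by omega))
        · exact ht
      have hsc : SingCond n R S i1 i2 hh :=
        ⟨Finset.mem_Icc.mpr ⟨by omega, by omega⟩, hw2,
         habs2' (hh + 1) (by omega) (by omega),
         b₀, hw1, Finset.mem_Icc.mpr ⟨by omega, by omega⟩, hi2Rb,
         fun u hu hu' => hi1S u (by omega) (by omega),
         fun u hu hu' => hwmin u hu (by omega)⟩
      have hmem : ((i1, i2, hh + 1) : ℕ × ℕ × ℕ) ∈ Sing n R S := ⟨hi1, hh, rfl, hsc⟩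
      rw [hSing] at hmem
      exact hmem
  · rintro ⟨rfl, rfl⟩
    exact hexist

/-! ### Global counting -/

variable (n R S) in
def FP (i j : ℕ) : Finset (ℕ × ℕ) :=
  ((Finset.Icc 1 n) ×ˢ (Finset.Icc 1 n)).filter (fun p => IsMut n R S i j p.1 p.2)

lemma mutset_coe (i j : ℕ) : MutSet n R S i j = ↑(FP n R S i j) := by
  ext q
  obtain ⟨a, b⟩ := q
  simp only [MutSet, Set.mem_setOf_eq, FP, Finset.coe_filter, Finset.mem_product,
    Finset.mem_Icc]
  constructor
  · intro hm
    exact ⟨⟨⟨hm.1, hm.2.1.trans hm.2.2.1⟩, ⟨hm.1.trans hm.2.1, hm.2.2.1⟩⟩, hm⟩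
  · exact fun h => h.2

lemma mutset_ncard (i j : ℕ) : (MutSet n R S i j).ncard = (FP n R S i j).card := by
  rw [mutset_coe, Set.ncard_coe_finset]

lemma FP_diag (i : ℕ) : FP n R S i i = ∅ := by
  rw [Finset.eq_empty_iff_forall_notMem]
  rintro ⟨a, b⟩ hq
  simp only [FP, Finset.mem_filter] at hq
  obtain ⟨_, m1, m2, m3, m4, m5, m6, m7, m8, m9⟩ := hq
  exact m7 a le_rfl m2 (m4 a le_rfl m2)

lemma MF_zero_eq (j : ℕ) :
    MF n R S j 0 = (Finset.Icc 1 (n + 1)).biUnion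
      (fun i => (FP n R S i j).image (fun p => (i, p.1, p.2))) := by
  ext q
  obtain ⟨i, a, b⟩ := q
  simp only [MF, FP, Finset.mem_biUnion, Finset.mem_filter, Finset.mem_image,
    Finset.mem_product, Finset.mem_Icc, Nat.zero_add]
  constructor
  · rintro ⟨⟨hi, ha, hb⟩, hm⟩
    exact ⟨i, hi, ⟨(a, b), ⟨⟨ha, hb⟩, hm⟩, rfl⟩⟩
  · rintro ⟨x, hx, ⟨⟨a', b'⟩, ⟨⟨ha', hb'⟩, hm⟩, heq⟩⟩
    injection heq with h1 h2
    injection h2 with h2 h3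
    subst h1; subst h2; subst h3
    exact ⟨⟨hx, ha', hb'⟩, hm⟩

lemma MF_zero_card (j : ℕ) :
    (MF n R S j 0).card = ∑ i ∈ Finset.Icc 1 (n + 1), (FP n R S i j).card := by
  rw [MF_zero_eq]
  rw [Finset.card_biUnion]
  · refine Finset.sum_congr rfl fun i _ => ?_
    refine Finset.card_image_of_injective _ fun x y hxy => ?_
    have e1 := congrArg (fun q : ℕ × ℕ × ℕ => q.2.1) hxy
    have e2 := congrArg (fun q : ℕ × ℕ × ℕ => q.2.2) hxy
    simp only at e1 e2
    exact Prod.ext e1 e2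
  · intro x hx y hy hxy
    rw [Function.onFun, Finset.disjoint_left]
    rintro ⟨i, a, b⟩ h1 h2
    simp only [Finset.mem_image] at h1 h2
    obtain ⟨p, _, hp⟩ := h1
    obtain ⟨q, _, hq⟩ := h2
    apply hxy
    have e1 := congrArg Prod.fst hp
    have e2 := congrArg Prod.fst hq
    simp only at e1 e2
    exact e1.trans e2.symm

end
end SingAux

theorem sing_empty_iff_transitive_tournament (n : ℕ) (hn : 1 ≤ n) (R S : ℕ → Finset ℕ)
    (hflat : FlatFamily n R) (hadm : RAdmissible n R S) :
    Sing n R S = ∅ ↔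
      ∃ r : ℕ → ℕ → Prop,
        (∀ i ∈ Finset.Icc 1 (n + 1), ¬ r i i) ∧
        (∀ i ∈ Finset.Icc 1 (n + 1), ∀ j ∈ Finset.Icc 1 (n + 1), ∀ k ∈ Finset.Icc 1 (n + 1),
          r i j → r j k → r i k) ∧
        (∀ i ∈ Finset.Icc 1 (n + 1), ∀ j ∈ Finset.Icc 1 (n + 1), i ≠ j → (r i j ∨ r j i)) ∧
        (∀ i ∈ Finset.Icc 1 (n + 1), ∀ j ∈ Finset.Icc 1 (n + 1), i ≠ j →
          (r i j → (MutSet n R S i j).ncard = 1) ∧ (r j i → MutSet n R S i j = ∅)) := by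
  classical
  constructor
  · -- forward direction
    intro hSing
    have hchain := SingAux.chain_of_sing_empty (n := n) hadm hSing
    refine ⟨fun i j => SingAux.ent n S i < SingAux.ent n S j, ?_, ?_, ?_, ?_⟩
    · intro i _
      exact lt_irrefl _
    · intro i _ j _ k _ h1 h2
      exact h1.trans h2
    · intro i hi j hj hij
      rcases lt_or_gt_of_ne
        (fun he => hij (SingAux.ent_inj hadm hchain hi hj hn he)) with h | h
      · exact Or.inl h
      · exact Or.inr h
    · intro i hi j hj hij
      constructor
      · intro hr
        obtain ⟨q, hq⟩ := SingAux.mut_singleton hadm hSing hchain hi hr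
        rw [hq, Set.ncard_singleton]
      · intro hr
        exact SingAux.mut_empty hchain hr
  · -- backward direction
    rintro ⟨r, hirr, htrans, htot, hcnt⟩
    rw [Set.eq_empty_iff_forall_notMem]
    rintro ⟨i₀, j, m⟩ hmem
    obtain ⟨hi₀, h, rfl, hsc⟩ := hmem
    obtain ⟨k, hkh, hkIcc, hjR, _, _⟩ := hsc.2.2.2
    rw [Finset.mem_Icc] at hkIcc
    have hj : j ∈ Finset.Icc 1 (n + 1) := hadm.1 k hkIcc.1 hkIcc.2 hjR
    -- pairwise count
    have hpair : ∀ i1 ∈ Finset.Icc 1 (n + 1), ∀ i2 ∈ Finset.Icc 1 (n + 1), i1 ≠ i2 →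
        (SingAux.FP n R S i1 i2).card + (SingAux.FP n R S i2 i1).card = 1 := by
      intro i1 h1 i2 h2 hne
      have hc1 := hcnt i1 h1 i2 h2 hne
      have hc2 := hcnt i2 h2 i1 h1 hne.symm
      rcases htot i1 h1 i2 h2 hne with hr | hr
      · have e1 : (SingAux.FP n R S i1 i2).card = 1 := by
          rw [← SingAux.mutset_ncard]; exact hc1.1 hr
        have e2 : (SingAux.FP n R S i2 i1).card = 0 := by
          rw [Finset.card_eq_zero, ← Finset.coe_eq_empty, ← SingAux.mutset_coe]
          exact hc2.2 hr
        omega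
      · have e1 : (SingAux.FP n R S i1 i2).card = 0 := by
          rw [Finset.card_eq_zero, ← Finset.coe_eq_empty, ← SingAux.mutset_coe]
          exact hc1.2 hr
        have e2 : (SingAux.FP n R S i2 i1).card = 1 := by
          rw [← SingAux.mutset_ncard]; exact hc2.1 hr
        omega
    set rows := Finset.Icc 1 (n + 1) with hrows
    have hrc : rows.card = n + 1 := by rw [hrows, Nat.card_Icc]; omega
    have hsum1 : ∑ p ∈ rows.offDiag,
        ((SingAux.FP n R S p.1 p.2).card + (SingAux.FP n R S p.2 p.1).card)
        = rows.offDiag.card := by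
      rw [Finset.sum_congr rfl (fun p hp => ?_), Finset.sum_const, smul_eq_mul, mul_one]
      rw [Finset.mem_offDiag] at hp
      exact hpair p.1 hp.1 p.2 hp.2.1 hp.2.2
    have hswap : ∑ p ∈ rows.offDiag, (SingAux.FP n R S p.2 p.1).card
        = ∑ p ∈ rows.offDiag, (SingAux.FP n R S p.1 p.2).card := by
      refine Finset.sum_equiv (Equiv.prodComm ℕ ℕ) (fun p => ?_) (fun p _ => rfl)
      simp only [Finset.mem_offDiag, Equiv.prodComm_apply, Prod.fst_swap, Prod.snd_swap]
      tauto
    have hsplit : ∑ p ∈ rows.offDiag,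
        ((SingAux.FP n R S p.1 p.2).card + (SingAux.FP n R S p.2 p.1).card)
        = (∑ p ∈ rows.offDiag, (SingAux.FP n R S p.1 p.2).card)
          + ∑ p ∈ rows.offDiag, (SingAux.FP n R S p.2 p.1).card :=
      Finset.sum_add_distrib
    have hMtot : ∑ j' ∈ rows, (SingAux.MF n R S j' 0).card
        = ∑ p ∈ rows ×ˢ rows, (SingAux.FP n R S p.2 p.1).card := by
      rw [Finset.sum_product]
      exact Finset.sum_congr rfl fun j' _ => SingAux.MF_zero_card j'
    have hprod : ∑ p ∈ rows ×ˢ rows, (SingAux.FP n R S p.2 p.1).card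
        = ∑ p ∈ rows.offDiag, (SingAux.FP n R S p.2 p.1).card := by
      rw [← Finset.diag_union_offDiag rows,
        Finset.sum_union (Finset.disjoint_diag_offDiag rows)]
      have hdiag : ∑ p ∈ rows.diag, (SingAux.FP n R S p.2 p.1).card = 0 := by
        rw [Finset.sum_diag]
        exact Finset.sum_eq_zero fun i _ => by rw [SingAux.FP_diag]; simp
      omega
    -- A side
    have hAtot : ∑ j' ∈ rows, SingAux.AF n S j' 0
        = ∑ t ∈ Finset.Icc 1 n, (n + 1 - t) := by
      have h1 : ∀ j', SingAux.AF n S j' 0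
          = ∑ t ∈ Finset.Icc 1 n, if j' ∉ S t then 1 else 0 := by
        intro j'
        simp only [SingAux.AF, Nat.zero_add]
        rw [Finset.card_filter]
      rw [Finset.sum_congr rfl fun j' _ => h1 j', Finset.sum_comm]
      refine Finset.sum_congr rfl fun t ht => ?_
      rw [Finset.mem_Icc] at ht
      rw [← Finset.card_filter]
      have hfe : rows.filter (fun j' => j' ∉ S t) = rows \ S t := by
        ext x; simp [Finset.mem_sdiff, Finset.mem_filter]
      rw [hfe, Finset.card_sdiff_of_subset ((hadm.2.1 t ht.1 ht.2).1),
        (hadm.2.1 t ht.1 ht.2).2, hrc]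
    have hgauss : (∑ t ∈ Finset.Icc 1 n, t) * 2 = (n + 1) * n := by
      have h0 : Finset.range (n + 1) = insert 0 (Finset.Icc 1 n) := by
        ext x; simp only [Finset.mem_range, Finset.mem_insert, Finset.mem_Icc]; omega
      have h1 := Finset.sum_range_id_mul_two (n + 1)
      rw [h0, Finset.sum_insert (by simp)] at h1
      simpa using h1
    have hreflect : (∑ t ∈ Finset.Icc 1 n, (n + 1 - t)) + ∑ t ∈ Finset.Icc 1 n, t
        = n * (n + 1) := by
      rw [← Finset.sum_add_distrib]
      rw [Finset.sum_congr rfl (fun t ht => ?_), Finset.sum_const, Nat.card_Icc,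
        smul_eq_mul]
      · have he : n + 1 - 1 = n := by omega
        rw [he]
      · rw [Finset.mem_Icc] at ht
        omega
    -- strict inequality
    have hstrict := SingAux.target_strict (j := j) hadm hsc
    have hineq : ∀ j' ∈ rows, SingAux.AF n S j' 0 ≤ (SingAux.MF n R S j' 0).card :=
      fun j' _ => SingAux.target_ineq hadm
    have hlt : ∑ j' ∈ rows, SingAux.AF n S j' 0
        < ∑ j' ∈ rows, (SingAux.MF n R S j' 0).card :=
      Finset.sum_lt_sum hineq ⟨j, hj, by omega⟩
    -- final arithmetic
    have hODcard : rows.offDiag.card = (n + 1) * (n + 1) - (n + 1) := by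
      rw [Finset.offDiag_card, hrc]
    have hid : (n + 1) * (n + 1) = n * (n + 1) + (n + 1) := Nat.succ_mul n (n + 1)
    have hid2 : (n + 1) * n = n * (n + 1) := Nat.mul_comm _ _
    omega
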